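/- Let (λ̊, λ) ∈ ℝ × ℝ³ with λ̊² + ‖λ‖² = 1, and let R(λ̊, λ) := 1 + 2 • (S(λ) * (λ̊ • 1 + S(λ))) be the Rodrigues rotation matrix. Then R(λ̊, λ) is a special orthogonal matrix: R(λ̊, λ)ᵀ * R(λ̊, λ) = 1 and det (R(λ̊, λ)) = 1. -/

import Mathlib

open Matrix
noncomputable section

/-- `ℝ³` as Euclidean space (vectors `Fin 3 → ℝ` with the Euclidean norm). -/
abbrev R3 : Type := EuclideanSpace ℝ (Fin 3)

/-- Skew-symmetric cross-product matrix `S(x)` of a vector `x ∈ ℝ³`. -/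
def S (x : R3) : Matrix (Fin 3) (Fin 3) ℝ :=
  !![0, -x 2, x 1; x 2, 0, -x 0; -x 1, x 0, 0]

/-- Projection matrix `Π_y := I - y yᵀ` onto the plane orthogonal to `y`. -/
def proj (y : R3) : Matrix (Fin 3) (Fin 3) ℝ := 1 - Matrix.vecMulVec y y

/-- Matrix–vector product, with the result regarded as an element of `ℝ³`
(so that `‖·‖` is the Euclidean norm). -/
def mulv (M : Matrix (Fin 3) (Fin 3) ℝ) (v : R3) : R3 := WithLp.toLp 2 (M.mulVec v)

/-- Cross product `×₃` regarded as an operation on `ℝ³`. -/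
def cross (a b : R3) : R3 := WithLp.toLp 2 (a.ofLp ⨯₃ b.ofLp)

/-- Rodrigues rotation matrix `R(λ̊, λ) := I + 2 S(λ)(λ̊ I + S(λ))` of a
quaternion pair `(λ̊, λ)`. -/
def rod (q0 : ℝ) (qv : R3) : Matrix (Fin 3) (Fin 3) ℝ :=
  1 + 2 • (S qv * (q0 • 1 + S qv))

theorem rod_eq (q0 : ℝ) (qv : R3) : rod q0 qv =
    !![1 + 2*(-(qv 2)^2 - (qv 1)^2), 2*(qv 0 * qv 1 - q0 * qv 2), 2*(qv 0 * qv 2 + q0 * qv 1);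
       2*(qv 0 * qv 1 + q0 * qv 2), 1 + 2*(-(qv 2)^2 - (qv 0)^2), 2*(qv 1 * qv 2 - q0 * qv 0);
       2*(qv 0 * qv 2 - q0 * qv 1), 2*(qv 1 * qv 2 + q0 * qv 0), 1 + 2*(-(qv 1)^2 - (qv 0)^2)] := by
  ext i j
  fin_cases i <;> fin_cases j <;>
    simp [rod, S, Matrix.mul_apply, Matrix.vecMul, dotProduct, Fin.sum_univ_three, Matrix.one_apply] <;> ring


/-- the Rodrigues matrix of a unit quaternion is special
orthogonal. -/
theorem stmt_4 (q0 : ℝ) (qv : R3) (h : q0 ^ 2 + ‖qv‖ ^ 2 = 1) :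
    (rod q0 qv)ᵀ * rod q0 qv = 1 ∧ (rod q0 qv).det = 1 := by
  have hn : q0 ^ 2 + (qv 0 ^ 2 + qv 1 ^ 2 + qv 2 ^ 2) = 1 := by
    rw [EuclideanSpace.norm_eq] at h
    rw [← h, Real.sq_sqrt (by positivity)]
    simp [Fin.sum_univ_three]
  rw [rod_eq]
  constructor
  · rw [show (!![1 + 2*(-(qv 2)^2 - (qv 1)^2), 2*(qv 0 * qv 1 - q0 * qv 2), 2*(qv 0 * qv 2 + q0 * qv 1);
       2*(qv 0 * qv 1 + q0 * qv 2), 1 + 2*(-(qv 2)^2 - (qv 0)^2), 2*(qv 1 * qv 2 - q0 * qv 0);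
       2*(qv 0 * qv 2 - q0 * qv 1), 2*(qv 1 * qv 2 + q0 * qv 0), 1 + 2*(-(qv 1)^2 - (qv 0)^2)])ᵀ =
      !![1 + 2*(-(qv 2)^2 - (qv 1)^2), 2*(qv 0 * qv 1 + q0 * qv 2), 2*(qv 0 * qv 2 - q0 * qv 1);
       2*(qv 0 * qv 1 - q0 * qv 2), 1 + 2*(-(qv 2)^2 - (qv 0)^2), 2*(qv 1 * qv 2 + q0 * qv 0);
       2*(qv 0 * qv 2 + q0 * qv 1), 2*(qv 1 * qv 2 - q0 * qv 0), 1 + 2*(-(qv 1)^2 - (qv 0)^2)]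
      from by ext i j; fin_cases i <;> fin_cases j <;> rfl]
    rw [Matrix.mul_fin_three, Matrix.one_fin_three]
    ext i j
    fin_cases i <;> fin_cases j <;>
      simp [Matrix.vecHead, Matrix.vecTail] <;>
      first
      | linear_combination (4*(qv 1^2 + qv 2^2)) * hn
      | linear_combination (4*(qv 0^2 + qv 2^2)) * hn
      | linear_combination (4*(qv 0^2 + qv 1^2)) * hn
      | linear_combination (-(4*qv 0*qv 1)) * hn
      | linear_combination (-(4*qv 0*qv 2)) * hn
      | linear_combination (-(4*qv 1*qv 2)) * hn
  · rw [Matrix.det_fin_three]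
    simp
    linear_combination (4*(qv 0^2 + qv 1^2 + qv 2^2)) * hn
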